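/- If m and n are positive integers with δ(n) − δ(m) rational, then n = m·3^k for some integer k, and consequently δ(n) − δ(m) is an integer. -/

import Mathlib

/-- `CanWrite n k`: `n` can be written using exactly `k` ones with `+` and `*`. -/
inductive CanWrite : ℕ → ℕ → Prop
  | one : CanWrite 1 1
  | add {a b j k : ℕ} : CanWrite a j → CanWrite b k → CanWrite (a + b) (j + k)
  | mul {a b j k : ℕ} : CanWrite a j → CanWrite b k → CanWrite (a * b) (j + k)

/-- Integer complexity: least number of ones needed to write `n`. -/
noncomputable def cpx (n : ℕ) : ℕ := sInf {k | CanWrite n k}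

/-- The defect `δ(n) = ‖n‖ − 3·log₃ n`. -/
noncomputable def defect (n : ℕ) : ℝ := (cpx n : ℝ) - 3 * Real.logb 3 n

/-- `n` is stable if `‖3^k n‖ = 3k + ‖n‖` for all `k`. -/
def Stable (n : ℕ) : Prop := ∀ k : ℕ, cpx (3 ^ k * n) = 3 * k + cpx n

/-- Stable complexity `‖n‖_st = min_{k≥0} (‖3^k n‖ − 3k)`. -/
noncomputable def cpxSt (n : ℕ) : ℕ := sInf {m | ∃ k : ℕ, cpx (3 ^ k * n) = m + 3 * k}

/-- Stable defect `δ_st(n) = ‖n‖_st − 3·log₃ n`. -/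
noncomputable def defectSt (n : ℕ) : ℝ := (cpxSt n : ℝ) - 3 * Real.logb 3 n


lemma log3_pos : 0 < Real.log 3 := Real.log_pos (by norm_num)

/-- If `log n - log m = r * log 3` with `r` rational, then `n = m * 3^k` for an integer `k`. -/
lemma key_pow3 (m n : ℕ) (hm : 0 < m) (hn : 0 < n) (r : ℚ)
    (hr : Real.log n - Real.log m = (r : ℝ) * Real.log 3) :
    ∃ k : ℤ, (n : ℝ) = (m : ℝ) * 3 ^ k ∧
      Real.logb 3 n - Real.logb 3 m = (k : ℝ) := by
  set d : ℕ := r.den with hd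
  set a : ℤ := r.num with ha
  have hd0 : 0 < d := r.pos
  -- clear denominators in the log identity
  have hcast : (r : ℝ) = (a : ℝ) / (d : ℝ) := by
    rw [ha, hd, Rat.cast_def]
  have h1 : (d : ℝ) * (Real.log n - Real.log m) = (a : ℝ) * Real.log 3 := by
    have hdne : (d : ℝ) ≠ 0 := by positivity
    rw [hr, hcast]; field_simp
  -- natural number identity via injectivity of log
  have hA0 : (0:ℕ) < n ^ d * 3 ^ (-a).toNat := by positivity
  have hB0 : (0:ℕ) < m ^ d * 3 ^ a.toNat := by positivity
  have hsub : ((a.toNat : ℝ)) - (((-a).toNat : ℝ)) = (a : ℝ) := by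
    exact_mod_cast congrArg (Int.cast : ℤ → ℝ) (Int.toNat_sub_toNat_neg a)
  have hlogeq : Real.log ((n ^ d * 3 ^ (-a).toNat : ℕ) : ℝ)
      = Real.log ((m ^ d * 3 ^ a.toNat : ℕ) : ℝ) := by
    push_cast
    rw [Real.log_mul (by positivity) (by positivity),
        Real.log_mul (by positivity) (by positivity),
        Real.log_pow, Real.log_pow, Real.log_pow, Real.log_pow]
    linear_combination h1 - Real.log 3 * hsub
  have hNat : n ^ d * 3 ^ (-a).toNat = m ^ d * 3 ^ a.toNat := by
    have e1 := Real.exp_log (x := ((n ^ d * 3 ^ (-a).toNat : ℕ) : ℝ)) (by exact_mod_cast hA0)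
    have e2 := Real.exp_log (x := ((m ^ d * 3 ^ a.toNat : ℕ) : ℝ)) (by exact_mod_cast hB0)
    have : ((n ^ d * 3 ^ (-a).toNat : ℕ) : ℝ) = ((m ^ d * 3 ^ a.toNat : ℕ) : ℝ) := by
      rw [← e1, ← e2, hlogeq]
    exact_mod_cast this
  -- factorizations of n and m agree away from 3
  have h3f : (3:ℕ).factorization = fun₀ | 3 => 1 := Nat.Prime.factorization (by norm_num)
  have hfac : ∀ p : ℕ, p ≠ 3 → n.factorization p = m.factorization p := by
    intro p hp3
    have h3ne : (3:ℕ) ≠ 0 := by norm_num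
    have this : (n ^ d * 3 ^ (-a).toNat).factorization p
        = (m ^ d * 3 ^ a.toNat).factorization p := by rw [hNat]
    simp only [Nat.factorization_mul (pow_ne_zero _ hn.ne') (pow_ne_zero _ h3ne),
      Nat.factorization_mul (pow_ne_zero _ hm.ne') (pow_ne_zero _ h3ne),
      Nat.factorization_pow, h3f, Finsupp.coe_add, Pi.add_apply, Finsupp.coe_smul,
      Pi.smul_apply, smul_eq_mul, Finsupp.single_apply, Ne.symm hp3, if_false,
      mul_zero, add_zero] at this
    exact Nat.eq_of_mul_eq_mul_left hd0 this
  -- build the power-of-3 relation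
  set u : ℕ := n.factorization 3 with hu
  set v : ℕ := m.factorization 3 with hv
  have hmul : 3 ^ v * n = 3 ^ u * m := by
    apply Nat.factorization_inj
      (by simp only [Set.mem_setOf_eq]; positivity)
      (by simp only [Set.mem_setOf_eq]; positivity)
    ext p
    have h3ne : (3:ℕ) ≠ 0 := by norm_num
    simp only [Nat.factorization_mul (pow_ne_zero _ h3ne) hn.ne',
      Nat.factorization_mul (pow_ne_zero _ h3ne) hm.ne',
      Nat.factorization_pow, h3f, Finsupp.coe_add, Pi.add_apply, Finsupp.coe_smul,
      Pi.smul_apply, smul_eq_mul, Finsupp.single_apply]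
    by_cases hp : p = 3
    · subst hp; simp only [if_true, mul_one, ← hu, ← hv]; omega
    · simp only [Ne.symm hp, if_false, mul_zero, zero_add, hfac p hp]
  have hR : (3:ℝ) ^ v * (n:ℝ) = 3 ^ u * (m:ℝ) := by exact_mod_cast hmul
  have hkey : (n : ℝ) = (m : ℝ) * 3 ^ ((u:ℤ) - v) := by
    rw [zpow_sub₀ (by norm_num), zpow_natCast, zpow_natCast]
    have h3v : (0:ℝ) < 3 ^ v := by positivity
    field_simp
    linarith [hR]
  refine ⟨(u : ℤ) - v, hkey, ?_⟩
  rw [hkey, Real.logb, Real.logb,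
    Real.log_mul (by positivity) (by positivity), Real.log_zpow]
  field_simp [log3_pos.ne']
  ring

theorem defect_diff_rational (m n : ℕ) (hm : 0 < m) (hn : 0 < n)
    (h : ∃ q : ℚ, defect n - defect m = (q : ℝ)) :
    (∃ k : ℤ, (n : ℝ) = (m : ℝ) * 3 ^ k) ∧ ∃ j : ℤ, defect n - defect m = (j : ℝ) := by

  obtain ⟨q, hq⟩ := h
  set r : ℚ := ((cpx n : ℚ) - (cpx m : ℚ) - q) / 3 with hrdef
  have hr : Real.log n - Real.log m = (r : ℝ) * Real.log 3 := by
    have hq' : ((cpx n : ℝ) - 3 * Real.logb 3 n) - ((cpx m : ℝ) - 3 * Real.logb 3 m)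
        = (q : ℝ) := hq
    have hlogb : Real.logb 3 n - Real.logb 3 m = ((cpx n : ℝ) - (cpx m : ℝ) - q) / 3 := by
      linarith
    have h2 : (Real.log n - Real.log m) / Real.log 3
        = ((cpx n : ℝ) - (cpx m : ℝ) - q) / 3 := by
      rw [← hlogb]; simp [Real.logb, sub_div]
    rw [hrdef]
    push_cast
    field_simp [log3_pos.ne'] at h2 ⊢
    linarith
  obtain ⟨k, hk1, hk2⟩ := key_pow3 m n hm hn r hr
  refine ⟨⟨k, hk1⟩, ⟨(cpx n : ℤ) - (cpx m : ℤ) - 3 * k, ?_⟩⟩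
  unfold defect
  push_cast
  linarith [hk2]
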